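/- Consider a state space system Σ ∼ (A,B,C,D) whose state space carries a poset-causal structure with structured subspaces R̄ ⊆ R ⊆ R̃ and N̄ ⊆ N (where R, N are the reachable and unobservable subspaces). Then the compressions Ã, B̃, C̃ of A, B, C to the structured subspace X̃ := R̃ ⊖ (R̄ ∩ N̄) satisfy C A^k B = C̃ Ã^k B̃ for all k ≥ 0, so (Ã, B̃, C̃, D) has the same transfer function moments as Σ; moreover X̃ is a structured subspace, i.e., X̃ = ⊕_{j∈P} X̃_j with X̃_j ⊆ X_j. -/

import Mathlib

open Matrix

attribute [local instance] Classical.propDecidable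

/-- Block index type for a partition `n` over the index set `P`. -/
abbrev BIdx {P : Type*} (n : P → ℕ) : Type _ := (i : P) × Fin (n i)

variable {P : Type*} [Fintype P] [DecidableEq P]

/-- The embedding matrix `I_n(:,S)` of `ℝ^{n_S}` into `ℝ^{n}`. -/
noncomputable def embMat (n : P → ℕ) (S : Set P) :
    Matrix (BIdx n) {a : BIdx n // a.1 ∈ S} ℝ :=
  Matrix.of fun p q => if p = (q : BIdx n) then 1 else 0

/-- The matrix of the orthogonal projection onto the coordinate subspace of block indices in `S`. -/
noncomputable def projMat (n : P → ℕ) (S : Set P) : Matrix (BIdx n) (BIdx n) ℝ :=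
  Matrix.of fun p q => if p = q ∧ p.1 ∈ S then 1 else 0

/-- Downstream set `↓S = {i | ∃ j ∈ S, j ⪰ i}` (where `j ⪰ i` is encoded as `le i j`). -/
def downSet (le : P → P → Prop) (S : Set P) : Set P := {i | ∃ j ∈ S, le i j}

/-- Upstream set `↑S = {i | ∃ j ∈ S, i ⪰ j}`. -/
def upSet (le : P → P → Prop) (S : Set P) : Set P := {i | ∃ j ∈ S, le j i}

/-- Membership of a block matrix in the block incidence space: `G_{ab} = 0` whenever `b ⋡ a`. -/
def Inc (le : P → P → Prop) {n m : P → ℕ} (G : Matrix (BIdx n) (BIdx m) ℝ) : Prop :=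
  ∀ a b, ¬ le a.1 b.1 → G a b = 0

/-- Block compression `G(Q,S)` of a block matrix to block rows in `Q` and block columns in `S`. -/
def bcmp {n m : P → ℕ} (G : Matrix (BIdx n) (BIdx m) ℝ) (Q S : Set P) :
    Matrix {a : BIdx n // a.1 ∈ Q} {a : BIdx m // a.1 ∈ S} ℝ :=
  G.submatrix Subtype.val Subtype.val

/-- The reachable subspace `R(A,B) = im [B, AB, ..., A^{n-1}B]`. -/
noncomputable def reach {ι κ : Type*} [Fintype ι] [Fintype κ] [DecidableEq ι]
    (A : Matrix ι ι ℝ) (B : Matrix ι κ ℝ) : Submodule ℝ (ι → ℝ) :=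
  ⨆ k : Fin (Fintype.card ι), LinearMap.range ((A ^ (k : ℕ) * B).mulVecLin)

/-- The unobservable subspace `N(C,A) = ker [C; CA; ...; CA^{n-1}]`. -/
noncomputable def unobs {ι κ : Type*} [Fintype ι] [Fintype κ] [DecidableEq ι]
    (C : Matrix κ ι ℝ) (A : Matrix ι ι ℝ) : Submodule ℝ (ι → ℝ) :=
  ⨅ k : Fin (Fintype.card ι), LinearMap.ker ((C * A ^ (k : ℕ)).mulVecLin)

/-- The reachable subspace, inside Euclidean space. -/
noncomputable def reachE {ι κ : Type*} [Fintype ι] [Fintype κ] [DecidableEq ι] [DecidableEq κ]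
    (A : Matrix ι ι ℝ) (B : Matrix ι κ ℝ) : Submodule ℝ (EuclideanSpace ℝ ι) :=
  ⨆ k : Fin (Fintype.card ι), LinearMap.range (Matrix.toEuclideanLin (A ^ (k : ℕ) * B))

/-- The unobservable subspace, inside Euclidean space. -/
noncomputable def unobsE {ι κ : Type*} [Fintype ι] [Fintype κ] [DecidableEq ι] [DecidableEq κ]
    (C : Matrix κ ι ℝ) (A : Matrix ι ι ℝ) : Submodule ℝ (EuclideanSpace ℝ ι) :=
  ⨅ k : Fin (Fintype.card ι), LinearMap.ker (Matrix.toEuclideanLin (C * A ^ (k : ℕ)))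

/-- The coordinate subspace `X_S = ⊕_{j ∈ S} X_j` of the global state space. -/
noncomputable def coordSub (n : P → ℕ) (S : Set P) : Submodule ℝ (BIdx n → ℝ) :=
  LinearMap.range (projMat n S).mulVecLin

/-- The coordinate subspace `X_S`, inside Euclidean space. -/
noncomputable def coordE (n : P → ℕ) (S : Set P) : Submodule ℝ (EuclideanSpace ℝ (BIdx n)) :=
  LinearMap.range (Matrix.toEuclideanLin (projMat n S))

/-- The `i`-downstream reachable set `R_i = R(A(↓i,↓i), B(↓i,i))`, embedded into the
global state space via `I_n(:,↓i)`. -/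
noncomputable def Ri (le : P → P → Prop) {n m : P → ℕ}
    (A : Matrix (BIdx n) (BIdx n) ℝ) (B : Matrix (BIdx n) (BIdx m) ℝ) (i : P) :
    Submodule ℝ (BIdx n → ℝ) :=
  Submodule.map (embMat n (downSet le {i})).mulVecLin
    (reach (bcmp A (downSet le {i}) (downSet le {i})) (bcmp B (downSet le {i}) {i}))

/-- The `i`-downstream reachable set, inside Euclidean space. -/
noncomputable def RiE (le : P → P → Prop) {n m : P → ℕ}
    (A : Matrix (BIdx n) (BIdx n) ℝ) (B : Matrix (BIdx n) (BIdx m) ℝ) (i : P) :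
    Submodule ℝ (EuclideanSpace ℝ (BIdx n)) :=
  Submodule.map (Matrix.toEuclideanLin (embMat n (downSet le {i})))
    (reachE (bcmp A (downSet le {i}) (downSet le {i})) (bcmp B (downSet le {i}) {i}))

/-- The `i`-upstream indistinguishable set `N_i = N(C(i,↑i), A(↑i,↑i))`, embedded into the
global state space via `I_n(:,↑i)`. -/
noncomputable def Ni (le : P → P → Prop) {n r : P → ℕ}
    (C : Matrix (BIdx r) (BIdx n) ℝ) (A : Matrix (BIdx n) (BIdx n) ℝ) (i : P) :
    Submodule ℝ (BIdx n → ℝ) :=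
  Submodule.map (embMat n (upSet le {i})).mulVecLin
    (unobs (bcmp C {i} (upSet le {i})) (bcmp A (upSet le {i}) (upSet le {i})))

/-- The `i`-upstream indistinguishable set, inside Euclidean space. -/
noncomputable def NiE (le : P → P → Prop) {n r : P → ℕ}
    (C : Matrix (BIdx r) (BIdx n) ℝ) (A : Matrix (BIdx n) (BIdx n) ℝ) (i : P) :
    Submodule ℝ (EuclideanSpace ℝ (BIdx n)) :=
  Submodule.map (Matrix.toEuclideanLin (embMat n (upSet le {i})))
    (unobsE (bcmp C {i} (upSet le {i})) (bcmp A (upSet le {i}) (upSet le {i})))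

/-- The independently reachable subspace `R̄ = ⊕_j Σ_{i∈↑j} (X_j ∩ R_i)`. -/
noncomputable def Rbar (le : P → P → Prop) {n m : P → ℕ}
    (A : Matrix (BIdx n) (BIdx n) ℝ) (B : Matrix (BIdx n) (BIdx m) ℝ) :
    Submodule ℝ (EuclideanSpace ℝ (BIdx n)) :=
  ⨆ j : P, ⨆ i : P, ⨆ _ : le j i, (coordE n {j} ⊓ RiE le A B i)

/-- The weakly upstream reachable subspace `R̃ = ⊕_j P_{X_j} R`. -/
noncomputable def Rtil {n m : P → ℕ}
    (A : Matrix (BIdx n) (BIdx n) ℝ) (B : Matrix (BIdx n) (BIdx m) ℝ) :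
    Submodule ℝ (EuclideanSpace ℝ (BIdx n)) :=
  ⨆ j : P, Submodule.map (Matrix.toEuclideanLin (projMat n {j})) (reachE A B)

/-- The subspace `N̄ = ⊕_j ∩_{i∈↓j} (N_i ∩ X_j)`. -/
noncomputable def Nbar (le : P → P → Prop) {n r : P → ℕ}
    (C : Matrix (BIdx r) (BIdx n) ℝ) (A : Matrix (BIdx n) (BIdx n) ℝ) :
    Submodule ℝ (EuclideanSpace ℝ (BIdx n)) :=
  ⨆ j : P, ⨅ i : P, ⨅ _ : le i j, (NiE le C A i ⊓ coordE n {j})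


/-! ### Auxiliary lemmas -/

section CayleyHamilton

variable {ι κ : Type*} [Fintype ι] [Fintype κ] [DecidableEq ι] [DecidableEq κ]

lemma aux_pow_mem_span_pow (A : Matrix ι ι ℝ) (k : ℕ) :
    A ^ k ∈ Submodule.span ℝ (Set.range fun i : Fin (Fintype.card ι) => A ^ (i : ℕ)) := by
  induction k using Nat.strong_induction_on with
  | _ k ih =>
    by_cases hk : k < Fintype.card ι
    · exact Submodule.subset_span ⟨⟨k, hk⟩, rfl⟩
    · push_neg at hk
      have hcard : A.charpoly.natDegree = Fintype.card ι := A.charpoly_natDegree_eq_dim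
      have hA : A ^ Fintype.card ι =
          -∑ i ∈ Finset.range (Fintype.card ι), A.charpoly.coeff i • A ^ i := by
        have h0 := A.aeval_self_charpoly
        rw [Polynomial.aeval_eq_sum_range, hcard, Finset.sum_range_succ, ← hcard,
          A.charpoly_monic.coeff_natDegree, one_smul, hcard] at h0
        exact eq_neg_of_add_eq_zero_right h0
      have hsplit : A ^ k = A ^ Fintype.card ι * A ^ (k - Fintype.card ι) := by
        rw [← pow_add, Nat.add_sub_cancel' hk]
      rw [hsplit, hA, neg_mul, Finset.sum_mul]
      apply Submodule.neg_mem
      apply Submodule.sum_mem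
      intro i hi
      rw [smul_mul_assoc, ← pow_add]
      refine Submodule.smul_mem _ _ (ih _ ?_)
      have := Finset.mem_range.mp hi
      omega

lemma aux_toEuclideanLin_apply (M : Matrix ι κ ℝ) (x : EuclideanSpace ℝ κ) :
    Matrix.toEuclideanLin M x = M.mulVec x := rfl

lemma aux_mem_reachE_pow (A : Matrix ι ι ℝ) (B : Matrix ι κ ℝ) (k : ℕ) (x : EuclideanSpace ℝ κ) :
    Matrix.toEuclideanLin (A ^ k * B) x ∈ reachE A B := by
  have h := aux_pow_mem_span_pow A k
  have key : ∀ M ∈ Submodule.span ℝ (Set.range fun i : Fin (Fintype.card ι) => A ^ (i : ℕ)),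
      Matrix.toEuclideanLin (M * B) x ∈ reachE A B := by
    intro M hM
    induction hM using Submodule.span_induction with
    | mem M hM =>
      obtain ⟨i, rfl⟩ := hM
      exact le_iSup (fun k : Fin (Fintype.card ι) =>
        LinearMap.range (Matrix.toEuclideanLin (A ^ (k : ℕ) * B))) i ⟨x, rfl⟩
    | zero => simp [reachE]
    | add M N hM hN ihM ihN =>
      have : Matrix.toEuclideanLin ((M + N) * B) x
          = Matrix.toEuclideanLin (M * B) x + Matrix.toEuclideanLin (N * B) x := by
        rw [Matrix.add_mul, map_add]; rfl
      rw [this]; exact Submodule.add_mem _ ihM ihN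
    | smul c M hM ihM =>
      have : Matrix.toEuclideanLin ((c • M) * B) x = c • Matrix.toEuclideanLin (M * B) x := by
        rw [Matrix.smul_mul, _root_.map_smul]; rfl
      rw [this]; exact Submodule.smul_mem _ _ ihM
  exact key _ h

lemma aux_reachE_mapsto (A : Matrix ι ι ℝ) (B : Matrix ι κ ℝ) {x : EuclideanSpace ℝ ι}
    (hx : x ∈ reachE A B) : Matrix.toEuclideanLin A x ∈ reachE A B := by
  refine Submodule.iSup_induction (motive := fun y => Matrix.toEuclideanLin A y ∈ reachE A B)
    _ hx (fun i x hx => ?_) (by simp) (fun x y ihx ihy => ?_)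
    
  · obtain ⟨u, rfl⟩ := hx
    have : Matrix.toEuclideanLin A (Matrix.toEuclideanLin (A ^ (i : ℕ) * B) u)
        = Matrix.toEuclideanLin (A ^ ((i : ℕ) + 1) * B) u := by
      apply WithLp.ofLp_injective
      simp only [aux_toEuclideanLin_apply, Matrix.mulVec_mulVec, ← Matrix.mul_assoc, pow_succ']
    rw [this]; exact aux_mem_reachE_pow A B _ u
  · rw [map_add]; exact Submodule.add_mem _ ihx ihy

lemma aux_unobsE_apply_zero (C : Matrix κ ι ℝ) (A : Matrix ι ι ℝ) {x : EuclideanSpace ℝ ι}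
    (hx : x ∈ unobsE C A) (k : ℕ) : Matrix.toEuclideanLin (C * A ^ k) x = 0 := by
  have h := aux_pow_mem_span_pow A k
  have key : ∀ M ∈ Submodule.span ℝ (Set.range fun i : Fin (Fintype.card ι) => A ^ (i : ℕ)),
      Matrix.toEuclideanLin (C * M) x = 0 := by
    intro M hM
    induction hM using Submodule.span_induction with
    | mem M hM =>
      obtain ⟨i, rfl⟩ := hM
      exact (Submodule.mem_iInf _).mp hx i
    | zero => simp
    | add M N hM hN ihM ihN =>
      have : Matrix.toEuclideanLin (C * (M + N)) x
          = Matrix.toEuclideanLin (C * M) x + Matrix.toEuclideanLin (C * N) x := by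
        rw [Matrix.mul_add, map_add]; rfl
      rw [this, ihM, ihN, add_zero]
    | smul c M hM ihM =>
      have : Matrix.toEuclideanLin (C * (c • M)) x = c • Matrix.toEuclideanLin (C * M) x := by
        rw [Matrix.mul_smul, _root_.map_smul]; rfl
      rw [this, ihM, smul_zero]
  exact key _ h

lemma aux_unobsE_mapsto (C : Matrix κ ι ℝ) (A : Matrix ι ι ℝ) {x : EuclideanSpace ℝ ι}
    (hx : x ∈ unobsE C A) : Matrix.toEuclideanLin A x ∈ unobsE C A := by
  refine (Submodule.mem_iInf _).mpr fun i => ?_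
  have : Matrix.toEuclideanLin (C * A ^ (i : ℕ)) (Matrix.toEuclideanLin A x)
      = Matrix.toEuclideanLin (C * A ^ ((i : ℕ) + 1)) x := by
    apply WithLp.ofLp_injective
    simp only [aux_toEuclideanLin_apply, Matrix.mulVec_mulVec, Matrix.mul_assoc, pow_succ]
  exact LinearMap.mem_ker.mpr (this.trans (aux_unobsE_apply_zero C A hx _))

end CayleyHamilton

section Coord

variable {P : Type*} [Fintype P] [DecidableEq P]

lemma aux_projMat_mulVec (n : P → ℕ) (S : Set P) (x : BIdx n → ℝ) (b : BIdx n) :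
    (projMat n S).mulVec x b = if b.1 ∈ S then x b else 0 := by
  classical
  simp only [Matrix.mulVec, dotProduct, projMat, Matrix.of_apply, ite_and]
  rw [Finset.sum_eq_single b (fun q _ hq => by simp [Ne.symm hq]) (by simp)]
  by_cases hb : b.1 ∈ S <;> simp [hb]

lemma aux_mem_coordE {n : P → ℕ} {S : Set P} {x : EuclideanSpace ℝ (BIdx n)} :
    x ∈ coordE n S ↔ ∀ b : BIdx n, b.1 ∉ S → x b = 0 := by
  constructor
  · rintro ⟨y, rfl⟩ b hb
    show (projMat n S).mulVec y b = 0
    rw [aux_projMat_mulVec]; simp [hb]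
  · intro h
    refine ⟨x, ?_⟩
    ext b
    show (projMat n S).mulVec x b = x b
    rw [aux_projMat_mulVec]
    by_cases hb : b.1 ∈ S <;> simp [hb, h b]

lemma aux_projMat_proj {n : P → ℕ} {S : Set P} {x : EuclideanSpace ℝ (BIdx n)}
    (hx : x ∈ coordE n S) : Matrix.toEuclideanLin (projMat n S) x = x := by
  ext b
  show (projMat n S).mulVec x b = x b
  rw [aux_projMat_mulVec]
  by_cases hb : b.1 ∈ S <;> simp [hb, aux_mem_coordE.mp hx b]

lemma aux_projMat_zero {n : P → ℕ} {S T : Set P} {x : EuclideanSpace ℝ (BIdx n)}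
    (hx : x ∈ coordE n T) (hST : ∀ j ∈ S, j ∉ T) :
    Matrix.toEuclideanLin (projMat n S) x = 0 := by
  ext b
  show (projMat n S).mulVec x b = 0
  rw [aux_projMat_mulVec]
  by_cases hb : b.1 ∈ S
  · simp [hb, aux_mem_coordE.mp hx b (hST _ hb)]
  · simp [hb]

lemma aux_sum_projMat {n : P → ℕ} (x : EuclideanSpace ℝ (BIdx n)) :
    ∑ j : P, Matrix.toEuclideanLin (projMat n ({j} : Set P)) x = x := by
  ext b
  have key : ∀ j, Matrix.toEuclideanLin (projMat n ({j} : Set P)) x b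
      = if b.1 = j then x b else 0 := by
    intro j
    show (projMat n {j}).mulVec x b = _
    rw [aux_projMat_mulVec]; simp [Set.mem_singleton_iff]
  calc (∑ j : P, Matrix.toEuclideanLin (projMat n ({j} : Set P)) x) b
      = ∑ j : P, Matrix.toEuclideanLin (projMat n ({j} : Set P)) x b :=
        by rw [WithLp.ofLp_sum, Finset.sum_apply]
    _ = ∑ j : P, if b.1 = j then x b else 0 := by simp [key]
    _ = x b := by rw [Finset.sum_ite_eq Finset.univ b.1 (fun _ => x b)]; simp

lemma aux_projMat_inner {n : P → ℕ} (S : Set P) (x y : EuclideanSpace ℝ (BIdx n)) :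
    inner ℝ (Matrix.toEuclideanLin (projMat n S) x) y
      = (inner ℝ x (Matrix.toEuclideanLin (projMat n S) y) : ℝ) := by
  simp only [PiLp.inner_apply, RCLike.inner_apply, conj_trivial]
  have hx : ∀ b, Matrix.toEuclideanLin (projMat n S) x b = if b.1 ∈ S then x b else 0 :=
    fun b => aux_projMat_mulVec n S x b
  have hy : ∀ b, Matrix.toEuclideanLin (projMat n S) y b = if b.1 ∈ S then y b else 0 :=
    fun b => aux_projMat_mulVec n S y b
  refine Finset.sum_congr rfl fun b _ => ?_
  rw [hx, hy]
  by_cases hb : b.1 ∈ S <;> simp [hb]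

/-- A submodule is *structured* if it is invariant under all block coordinate projections. -/
def Str {n : P → ℕ} (U : Submodule ℝ (EuclideanSpace ℝ (BIdx n))) : Prop :=
  ∀ x ∈ U, ∀ j : P, Matrix.toEuclideanLin (projMat n ({j} : Set P)) x ∈ U

lemma aux_str_inf {n : P → ℕ} {U V : Submodule ℝ (EuclideanSpace ℝ (BIdx n))}
    (hU : Str U) (hV : Str V) : Str (U ⊓ V) :=
  fun x hx j => ⟨hU x hx.1 j, hV x hx.2 j⟩

lemma aux_str_orth {n : P → ℕ} {U : Submodule ℝ (EuclideanSpace ℝ (BIdx n))}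
    (hU : Str U) : Str Uᗮ := by
  intro x hx j
  rw [Submodule.mem_orthogonal] at hx ⊢
  intro u hu
  rw [real_inner_comm, aux_projMat_inner, real_inner_comm]
  exact hx _ (hU u hu j)

lemma aux_str_iSup {n : P → ℕ} {ρ : Sort*} {U : ρ → Submodule ℝ (EuclideanSpace ℝ (BIdx n))}
    {f : ρ → P} (hU : ∀ i, U i ≤ coordE n {f i}) : Str (⨆ i, U i) := by
  intro x hx j
  refine Submodule.iSup_induction (motive := fun y =>
      Matrix.toEuclideanLin (projMat n ({j} : Set P)) y ∈ ⨆ i, U i) _ hx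
    (fun i y hy => ?_) (by simp) ?_
  · show Matrix.toEuclideanLin (projMat n ({j} : Set P)) y ∈ ⨆ i, U i
    by_cases hj : f i = j
    · rw [aux_projMat_proj (hj ▸ hU i hy)]
      exact Submodule.mem_iSup_of_mem i hy
    · rw [aux_projMat_zero (hU i hy)]
      · exact Submodule.zero_mem _
      · intro a ha hb
        rw [Set.mem_singleton_iff] at ha hb
        exact hj (by rw [← hb, ha])
  · intro y z ihy ihz
    rw [map_add]; exact Submodule.add_mem _ ihy ihz

lemma aux_str_eq_iSup {n : P → ℕ} {U : Submodule ℝ (EuclideanSpace ℝ (BIdx n))}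
    (hU : Str U) : U = ⨆ j : P, (U ⊓ coordE n {j}) := by
  refine le_antisymm ?_ (iSup_le fun j => inf_le_left)
  intro x hx
  rw [← aux_sum_projMat x]
  refine Submodule.sum_mem _ fun j _ => ?_
  exact Submodule.mem_iSup_of_mem j ⟨hU x hx j, ⟨x, rfl⟩⟩

end Coord


section Poset

variable {P : Type*} [Fintype P] [DecidableEq P] [PartialOrder P]

lemma aux_embMat_transpose_mul_self {n : P → ℕ} (S : Set P) :
    (embMat n S)ᵀ * embMat n S = 1 := by
  ext q q'
  simp only [Matrix.mul_apply, Matrix.transpose_apply, embMat, Matrix.of_apply]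
  rw [Finset.sum_eq_single (q : BIdx n)
    (fun b _ hb => by rw [if_neg hb, zero_mul]) (by simp)]
  by_cases h : q = q'
  · subst h; simp
  · have : (q : BIdx n) ≠ (q' : BIdx n) := fun hh => h (Subtype.ext hh)
    simp [this, Matrix.one_apply, h]

lemma aux_mul_embMat {n m' : P → ℕ} (G : Matrix (BIdx n) (BIdx m') ℝ) (S T : Set P)
    (h : ∀ p q, q.1 ∈ T → G p q ≠ 0 → p.1 ∈ S) :
    G * embMat m' T = embMat n S * bcmp G S T := by
  ext p q
  have lhs : (G * embMat m' T) p q = G p (q : BIdx m') := by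
    simp only [Matrix.mul_apply, embMat, Matrix.of_apply]
    rw [Finset.sum_eq_single (q : BIdx m') (fun b _ hb => by simp [hb]) (by simp)]
    simp
  have rhs : (embMat n S * bcmp G S T) p q
      = if hp : p.1 ∈ S then G p (q : BIdx m') else 0 := by
    simp only [Matrix.mul_apply, embMat, Matrix.of_apply, bcmp, Matrix.submatrix_apply]
    by_cases hp : p.1 ∈ S
    · rw [Finset.sum_eq_single (⟨p, hp⟩ : {a : BIdx n // a.1 ∈ S})
        (fun b _ hb => by
          rw [if_neg, zero_mul]
          exact fun hh => hb (Subtype.ext hh.symm)) (by simp)]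
      simp [hp]
    · rw [Finset.sum_eq_zero]
      · simp [hp]
      · intro b _
        have : p ≠ (b : BIdx n) := fun hh => hp (hh ▸ b.2)
        simp [this]
  rw [lhs, rhs]
  by_cases hp : p.1 ∈ S
  · simp [hp]
  · simp only [hp, dif_neg, not_false_iff]
    by_contra hG
    exact hp (h p q q.2 (by simpa using hG))

lemma aux_embMat_transpose_mul {n m' : P → ℕ} (G : Matrix (BIdx n) (BIdx m') ℝ) (S T : Set P)
    (h : ∀ p q, p.1 ∈ S → G p q ≠ 0 → q.1 ∈ T) :
    (embMat n S)ᵀ * G = bcmp G S T * (embMat m' T)ᵀ := by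
  have := aux_mul_embMat Gᵀ T S (fun p q hq hG => h q p hq (by simpa using hG))
  have h2 := congrArg Matrix.transpose this
  rw [Matrix.transpose_mul, Matrix.transpose_mul, Matrix.transpose_transpose] at h2
  rw [h2]
  congr 1

end Poset

section PosetIncl

variable {P : Type*} [Fintype P] [DecidableEq P] [PartialOrder P]
variable {n m r : P → ℕ}

lemma aux_embT_mulVec {n' : P → ℕ} (S : Set P) (x : BIdx n' → ℝ) (q : {a : BIdx n' // a.1 ∈ S}) :
    ((embMat n' S)ᵀ).mulVec x q = x (q : BIdx n') := by
  simp only [Matrix.mulVec, dotProduct, Matrix.transpose_apply, embMat, Matrix.of_apply]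
  rw [Finset.sum_eq_single (q : BIdx n')
    (fun b _ hb => by rw [if_neg hb, zero_mul]) (by simp)]
  simp

lemma aux_A_emb_down (A : Matrix (BIdx n) (BIdx n) ℝ) (hA : Inc (· ≤ ·) A) (i : P) :
    A * embMat n (downSet (· ≤ ·) {i}) =
      embMat n (downSet (· ≤ ·) {i}) *
        bcmp A (downSet (· ≤ ·) {i}) (downSet (· ≤ ·) {i}) := by
  refine aux_mul_embMat A _ _ fun p q hq hG => ?_
  obtain ⟨t, ht, hle⟩ := hq
  have hpq : p.1 ≤ q.1 := by by_contra hc; exact hG (hA p q hc)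
  exact ⟨t, ht, hpq.trans hle⟩

lemma aux_B_emb_down (B : Matrix (BIdx n) (BIdx m) ℝ) (hB : Inc (· ≤ ·) B) (i : P) :
    B * embMat m ({i} : Set P) =
      embMat n (downSet (· ≤ ·) {i}) * bcmp B (downSet (· ≤ ·) {i}) {i} := by
  refine aux_mul_embMat B _ _ fun p q hq hG => ?_
  have hpq : p.1 ≤ q.1 := by by_contra hc; exact hG (hB p q hc)
  exact ⟨q.1, hq, hpq⟩

lemma aux_emb_pow (A : Matrix (BIdx n) (BIdx n) ℝ) (B : Matrix (BIdx n) (BIdx m) ℝ)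
    (hA : Inc (· ≤ ·) A) (hB : Inc (· ≤ ·) B) (i : P) (k : ℕ) :
    embMat n (downSet (· ≤ ·) {i}) *
      ((bcmp A (downSet (· ≤ ·) {i}) (downSet (· ≤ ·) {i})) ^ k *
        bcmp B (downSet (· ≤ ·) {i}) {i})
    = A ^ k * (B * embMat m ({i} : Set P)) := by
  induction k with
  | zero => simp [aux_B_emb_down B hB i]
  | succ k ih =>
    rw [pow_succ', pow_succ', Matrix.mul_assoc, ← Matrix.mul_assoc (embMat n _),
      ← aux_A_emb_down A hA i, Matrix.mul_assoc, ih, ← Matrix.mul_assoc]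

lemma aux_RiE_le_reachE (A : Matrix (BIdx n) (BIdx n) ℝ) (B : Matrix (BIdx n) (BIdx m) ℝ)
    (hA : Inc (· ≤ ·) A) (hB : Inc (· ≤ ·) B) (i : P) :
    RiE (· ≤ ·) A B i ≤ reachE A B := by
  rintro x ⟨y, hy, rfl⟩
  set D := downSet (· ≤ ·) ({i} : Set P) with hD
  refine Submodule.iSup_induction
    (motive := fun y => Matrix.toEuclideanLin (embMat n D) y ∈ reachE A B) _ hy
    (fun kk z hz => ?_) (by simp) ?_
  · obtain ⟨u, rfl⟩ := hz
    show Matrix.toEuclideanLin (embMat n D)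
      (Matrix.toEuclideanLin ((bcmp A D D) ^ (kk : ℕ) * bcmp B D {i}) u) ∈ reachE A B
    have : Matrix.toEuclideanLin (embMat n D)
        (Matrix.toEuclideanLin ((bcmp A D D) ^ (kk : ℕ) * bcmp B D {i}) u)
        = Matrix.toEuclideanLin (A ^ (kk : ℕ) * B)
          (Matrix.toEuclideanLin (embMat m ({i} : Set P)) u) := by
      apply WithLp.ofLp_injective
      simp only [aux_toEuclideanLin_apply, Matrix.mulVec_mulVec]
      rw [aux_emb_pow A B hA hB i, ← Matrix.mul_assoc]
    rw [this]
    exact aux_mem_reachE_pow A B _ _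
  · intro y z ihy ihz
    rw [map_add]; exact Submodule.add_mem _ ihy ihz

lemma aux_Rbar_le_reachE (A : Matrix (BIdx n) (BIdx n) ℝ) (B : Matrix (BIdx n) (BIdx m) ℝ)
    (hA : Inc (· ≤ ·) A) (hB : Inc (· ≤ ·) B) :
    Rbar (· ≤ ·) A B ≤ reachE A B := by
  refine iSup_le fun j => iSup_le fun i => iSup_le fun _ => ?_
  exact inf_le_right.trans (aux_RiE_le_reachE A B hA hB i)

lemma aux_reachE_le_Rtil (A : Matrix (BIdx n) (BIdx n) ℝ) (B : Matrix (BIdx n) (BIdx m) ℝ) :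
    reachE A B ≤ Rtil A B := by
  intro x hx
  rw [← aux_sum_projMat x]
  exact Submodule.sum_mem _ fun j _ => Submodule.mem_iSup_of_mem j ⟨x, hx, rfl⟩

lemma aux_A_emb_up (A : Matrix (BIdx n) (BIdx n) ℝ) (hA : Inc (· ≤ ·) A) (i : P) :
    (embMat n (upSet (· ≤ ·) {i}))ᵀ * A =
      bcmp A (upSet (· ≤ ·) {i}) (upSet (· ≤ ·) {i}) * (embMat n (upSet (· ≤ ·) {i}))ᵀ := by
  refine aux_embMat_transpose_mul A _ _ fun p q hp hG => ?_
  obtain ⟨t, ht, hle⟩ := hp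
  have hpq : p.1 ≤ q.1 := by by_contra hc; exact hG (hA p q hc)
  exact ⟨t, ht, hle.trans hpq⟩

lemma aux_C_emb_up (C : Matrix (BIdx r) (BIdx n) ℝ) (hC : Inc (· ≤ ·) C) (i : P) :
    (embMat r ({i} : Set P))ᵀ * C =
      bcmp C {i} (upSet (· ≤ ·) {i}) * (embMat n (upSet (· ≤ ·) {i}))ᵀ := by
  refine aux_embMat_transpose_mul C _ _ fun p q hp hG => ?_
  have hpq : p.1 ≤ q.1 := by by_contra hc; exact hG (hC p q hc)
  exact ⟨p.1, hp, hpq⟩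

lemma aux_CA_pow_row (C : Matrix (BIdx r) (BIdx n) ℝ) (A : Matrix (BIdx n) (BIdx n) ℝ)
    (hC : Inc (· ≤ ·) C) (hA : Inc (· ≤ ·) A) (i : P) (k : ℕ) :
    (embMat r ({i} : Set P))ᵀ * (C * A ^ k) =
      bcmp C {i} (upSet (· ≤ ·) {i}) * (bcmp A (upSet (· ≤ ·) {i}) (upSet (· ≤ ·) {i})) ^ k *
        (embMat n (upSet (· ≤ ·) {i}))ᵀ := by
  induction k with
  | zero => simpa using aux_C_emb_up C hC i
  | succ k ih =>
    rw [pow_succ, pow_succ]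
    calc (embMat r ({i} : Set P))ᵀ * (C * (A ^ k * A))
        = ((embMat r ({i} : Set P))ᵀ * (C * A ^ k)) * A := by
          simp only [Matrix.mul_assoc]
      _ = bcmp C {i} (upSet (· ≤ ·) {i}) * (bcmp A (upSet (· ≤ ·) {i}) (upSet (· ≤ ·) {i})) ^ k *
            ((embMat n (upSet (· ≤ ·) {i}))ᵀ * A) := by rw [ih, Matrix.mul_assoc]
      _ = bcmp C {i} (upSet (· ≤ ·) {i}) * (bcmp A (upSet (· ≤ ·) {i}) (upSet (· ≤ ·) {i})) ^ k *
            (bcmp A (upSet (· ≤ ·) {i}) (upSet (· ≤ ·) {i}) * (embMat n (upSet (· ≤ ·) {i}))ᵀ) := by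
          rw [aux_A_emb_up A hA i]
      _ = bcmp C {i} (upSet (· ≤ ·) {i}) *
            ((bcmp A (upSet (· ≤ ·) {i}) (upSet (· ≤ ·) {i})) ^ k *
              bcmp A (upSet (· ≤ ·) {i}) (upSet (· ≤ ·) {i})) *
            (embMat n (upSet (· ≤ ·) {i}))ᵀ := by simp only [Matrix.mul_assoc]

lemma aux_Nbar_le_unobsE (C : Matrix (BIdx r) (BIdx n) ℝ) (A : Matrix (BIdx n) (BIdx n) ℝ)
    (hC : Inc (· ≤ ·) C) (hA : Inc (· ≤ ·) A) :
    Nbar (· ≤ ·) C A ≤ unobsE C A := by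
  refine iSup_le fun j => ?_
  intro x hx
  have hmem : ∀ i : P, i ≤ j → x ∈ NiE (· ≤ ·) C A i ⊓ coordE n {j} := fun i hij =>
    (Submodule.mem_iInf _).mp ((Submodule.mem_iInf _).mp hx i) hij
  have hxj : x ∈ coordE n {j} := (hmem j le_rfl).2
  have main : ∀ k : ℕ, Matrix.toEuclideanLin (C * A ^ k) x = 0 := by
    intro k
    ext a
    set i := a.1 with hi
    set U := upSet (· ≤ ·) ({i} : Set P) with hU
    have step1 : Matrix.toEuclideanLin (C * A ^ k) x a =
        ((bcmp C {i} U * (bcmp A U U) ^ k).mulVec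
          (((embMat n U)ᵀ).mulVec x)) ⟨a, rfl⟩ := by
      have h1 : ((embMat r ({i} : Set P))ᵀ * (C * A ^ k)).mulVec x ⟨a, rfl⟩
          = Matrix.toEuclideanLin (C * A ^ k) x a := by
        rw [← Matrix.mulVec_mulVec]
        exact aux_embT_mulVec ({i} : Set P) ((C * A ^ k).mulVec x) ⟨a, rfl⟩
      rw [← h1, aux_CA_pow_row C A hC hA i k, ← Matrix.mulVec_mulVec]
    rw [step1]
    by_cases hij : i ≤ j
    · obtain ⟨y, hy, hxy⟩ := (hmem i hij).1
      have hyx : ((embMat n U)ᵀ).mulVec x = y := by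
        rw [← hxy]
        show ((embMat n U)ᵀ).mulVec ((embMat n U).mulVec y) = y
        rw [Matrix.mulVec_mulVec, aux_embMat_transpose_mul_self, Matrix.one_mulVec]
      rw [hyx]
      have hz := aux_unobsE_apply_zero (C := bcmp C {i} U) (A := bcmp A U U) hy k
      apply_fun WithLp.ofLp at hz
      rw [aux_toEuclideanLin_apply] at hz
      show ((bcmp C {i} U * bcmp A U U ^ k).mulVec y) ⟨a, rfl⟩ = 0
      rw [hz]
      rfl
    · have hzero : ((embMat n U)ᵀ).mulVec x = 0 := by
        funext q
        rw [aux_embT_mulVec]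
        by_contra hne
        have hq : (q : BIdx n).1 = j := by
          by_contra hc
          exact hne (aux_mem_coordE.mp hxj _ (by simpa using hc))
        obtain ⟨t, ht, hle⟩ := q.2
        rw [Set.mem_singleton_iff] at ht
        have hiq : i ≤ (q : BIdx n).1 := by rw [← ht]; exact hle
        rw [hq] at hiq
        exact hij hiq
      rw [hzero, Matrix.mulVec_zero]
      rfl
  refine (Submodule.mem_iInf _).mpr fun k => ?_
  exact LinearMap.mem_ker.mpr (main (k : ℕ))

end PosetIncl

/-- Kalman-type reduction for poset-causal systems: for a poset-causal system
`Σ_P ∼ (A,B,C,D)` with structured subspaces `R̄ ⊆ R ⊆ R̃` and `N̄ ⊆ N`, the compressions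
`Ã, B̃, C̃` of `A, B, C` to the structured subspace `X̃ = R̃ ⊖ (R̄ ∩ N̄)` satisfy
`C A^k B = C̃ Ã^k B̃` for all `k ≥ 0`, so the reduced system has the same transfer function
moments as `Σ`; moreover `X̃` is a structured subspace: `X̃ = ⊕_{j∈P} (X̃ ∩ X_j)`. -/
theorem poset_causal_kalman_reduction [PartialOrder P] (n m r : P → ℕ)
    (A : Matrix (BIdx n) (BIdx n) ℝ) (B : Matrix (BIdx n) (BIdx m) ℝ)
    (C : Matrix (BIdx r) (BIdx n) ℝ)
    (hA : Inc (· ≤ ·) A) (hB : Inc (· ≤ ·) B) (hC : Inc (· ≤ ·) C) :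
    (∀ k : ℕ,
        Matrix.toEuclideanLin (C * A ^ k * B) =
          (Matrix.toEuclideanLin C ∘ₗ
              (Rtil A B ⊓ (Rbar (· ≤ ·) A B ⊓ Nbar (· ≤ ·) C A)ᗮ).subtype) ∘ₗ
            (((Submodule.orthogonalProjectionOnto
                  (Rtil A B ⊓ (Rbar (· ≤ ·) A B ⊓ Nbar (· ≤ ·) C A)ᗮ)).toLinearMap ∘ₗ
                Matrix.toEuclideanLin A ∘ₗ
                (Rtil A B ⊓ (Rbar (· ≤ ·) A B ⊓ Nbar (· ≤ ·) C A)ᗮ).subtype) ^ k) ∘ₗ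
            ((Submodule.orthogonalProjectionOnto
                (Rtil A B ⊓ (Rbar (· ≤ ·) A B ⊓ Nbar (· ≤ ·) C A)ᗮ)).toLinearMap ∘ₗ
              Matrix.toEuclideanLin B)) ∧
      Rtil A B ⊓ (Rbar (· ≤ ·) A B ⊓ Nbar (· ≤ ·) C A)ᗮ =
        ⨆ j : P, (Rtil A B ⊓ (Rbar (· ≤ ·) A B ⊓ Nbar (· ≤ ·) C A)ᗮ ⊓ coordE n {j}) := by
  classical
  set W := Rbar (· ≤ ·) A B ⊓ Nbar (· ≤ ·) C A with hW
  set V := Rtil A B ⊓ Wᗮ with hV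
  set R := reachE A B with hR
  set N := unobsE C A with hN
  set Ati := (Submodule.orthogonalProjectionOnto V).toLinearMap ∘ₗ Matrix.toEuclideanLin A ∘ₗ V.subtype
    with hAti
  have hWR : W ≤ R := inf_le_left.trans (aux_Rbar_le_reachE A B hA hB)
  have hWN : W ≤ N := inf_le_right.trans (aux_Nbar_le_unobsE C A hC hA)
  have hWRN : W ≤ R ⊓ N := le_inf hWR hWN
  have hRRt : R ≤ Rtil A B := aux_reachE_le_Rtil A B
  have hWRt : W ≤ Rtil A B := hWR.trans hRRt
  have hsup : W ⊔ (Wᗮ ⊓ Rtil A B) = Rtil A B :=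
    Submodule.sup_orthogonal_inf_of_hasOrthogonalProjection hWRt
  have hdec : ∀ x ∈ Rtil A B,
      x - (Submodule.orthogonalProjectionOnto V x : EuclideanSpace ℝ (BIdx n)) ∈ W := by
    intro x hx
    rw [← hsup] at hx
    obtain ⟨w, hw, v, hv, rfl⟩ := Submodule.mem_sup.mp hx
    have hvV : v ∈ V := by rw [hV, inf_comm]; exact hv
    have h1 : Submodule.orthogonalProjectionOnto V w = 0 := by
      apply Submodule.orthogonalProjectionOnto_apply_of_mem_orthogonal
      exact (Submodule.orthogonal_le (inf_le_right : V ≤ Wᗮ))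
        (Submodule.le_orthogonal_orthogonal W hw)
    have h2 : (Submodule.orthogonalProjectionOnto V v : EuclideanSpace ℝ (BIdx n)) = v :=
      congrArg Subtype.val (Submodule.orthogonalProjectionOnto_mem_subspace_eq_self ⟨v, hvV⟩)
    have h3 : (Submodule.orthogonalProjectionOnto V (w + v) : EuclideanSpace ℝ (BIdx n)) = v := by
      rw [map_add, h1, zero_add, h2]
    rw [h3]
    simpa using hw
  have hRNinv : ∀ x ∈ R ⊓ N, Matrix.toEuclideanLin A x ∈ R ⊓ N := fun x hx =>
    ⟨aux_reachE_mapsto A B hx.1, aux_unobsE_mapsto C A hx.2⟩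
  have hpowstep : ∀ (k : ℕ) (x : EuclideanSpace ℝ (BIdx n)),
      Matrix.toEuclideanLin (A ^ (k + 1)) x
        = Matrix.toEuclideanLin A (Matrix.toEuclideanLin (A ^ k) x) := by
    intro k x
    apply WithLp.ofLp_injective
    simp only [aux_toEuclideanLin_apply, Matrix.mulVec_mulVec, pow_succ']
  have key : ∀ k : ℕ, ∀ x, x ∈ R →
      Matrix.toEuclideanLin (A ^ k) x ∈ R ∧
      Matrix.toEuclideanLin (A ^ k) x -
        ((Ati ^ k) (Submodule.orthogonalProjectionOnto V x) : EuclideanSpace ℝ (BIdx n)) ∈ R ⊓ N := by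
    intro k
    induction k with
    | zero =>
      intro x hxR
      have h0 : Matrix.toEuclideanLin (A ^ 0) x = x := by
        simp [aux_toEuclideanLin_apply, Matrix.one_mulVec]
      refine ⟨by rw [h0]; exact hxR, ?_⟩
      rw [h0, pow_zero, Module.End.one_apply]
      exact hWRN (hdec x (hRRt hxR))
    | succ k ih =>
      intro x hxR
      obtain ⟨hyR, hd⟩ := ih x hxR
      set y := Matrix.toEuclideanLin (A ^ k) x with hy
      set v := (Ati ^ k) (Submodule.orthogonalProjectionOnto V x) with hv
      have hvR : (v : EuclideanSpace ℝ (BIdx n)) ∈ R := by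
        have hvy : (v : EuclideanSpace ℝ (BIdx n)) = y - (y - v) := by abel
        rw [hvy]
        exact Submodule.sub_mem _ hyR (hd.1)
      have hAvR : Matrix.toEuclideanLin A (v : EuclideanSpace ℝ (BIdx n)) ∈ R :=
        aux_reachE_mapsto A B hvR
      have h1 : Matrix.toEuclideanLin A (v : EuclideanSpace ℝ (BIdx n)) -
          (Submodule.orthogonalProjectionOnto V (Matrix.toEuclideanLin A v) : EuclideanSpace ℝ (BIdx n)) ∈ W :=
        hdec _ (hRRt hAvR)
      have hAd : Matrix.toEuclideanLin A (y - v) ∈ R ⊓ N := hRNinv _ hd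
      have e2 : ((Ati ^ (k + 1)) (Submodule.orthogonalProjectionOnto V x) : EuclideanSpace ℝ (BIdx n))
          = (Submodule.orthogonalProjectionOnto V (Matrix.toEuclideanLin A v) : EuclideanSpace ℝ (BIdx n)) := by
        rw [pow_succ', Module.End.mul_apply, ← hv]
        rfl
      constructor
      · rw [hpowstep]
        exact aux_reachE_mapsto A B hyR
      · rw [hpowstep, e2, ← hy]
        have hsplit : Matrix.toEuclideanLin A y -
            (Submodule.orthogonalProjectionOnto V (Matrix.toEuclideanLin A v) : EuclideanSpace ℝ (BIdx n))
            = (Matrix.toEuclideanLin A (v : EuclideanSpace ℝ (BIdx n)) -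
                (Submodule.orthogonalProjectionOnto V (Matrix.toEuclideanLin A v) :
                  EuclideanSpace ℝ (BIdx n))) + Matrix.toEuclideanLin A (y - v) := by
          rw [map_sub]
          abel
        rw [hsplit]
        exact Submodule.add_mem _ (hWRN h1) hAd
  constructor
  · intro k
    apply LinearMap.ext
    intro u
    have hBu : Matrix.toEuclideanLin B u ∈ R := by
      have h := aux_mem_reachE_pow A B 0 u
      rw [pow_zero, Matrix.one_mul] at h
      exact h
    obtain ⟨-, hd⟩ := key k _ hBu
    have hCd : Matrix.toEuclideanLin C
        (Matrix.toEuclideanLin (A ^ k) (Matrix.toEuclideanLin B u) -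
          ((Ati ^ k) (Submodule.orthogonalProjectionOnto V (Matrix.toEuclideanLin B u)) :
            EuclideanSpace ℝ (BIdx n))) = 0 := by
      have h0 := aux_unobsE_apply_zero (C := C) (A := A) hd.2 0
      rw [pow_zero, Matrix.mul_one] at h0
      exact h0
    have hCeq : Matrix.toEuclideanLin C
          (Matrix.toEuclideanLin (A ^ k) (Matrix.toEuclideanLin B u))
        = Matrix.toEuclideanLin C
          ((Ati ^ k) (Submodule.orthogonalProjectionOnto V (Matrix.toEuclideanLin B u)) :
            EuclideanSpace ℝ (BIdx n)) := by
      rw [← sub_eq_zero, ← map_sub]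
      exact hCd
    have lhs : Matrix.toEuclideanLin (C * A ^ k * B) u
        = Matrix.toEuclideanLin C
          (Matrix.toEuclideanLin (A ^ k) (Matrix.toEuclideanLin B u)) := by
      apply WithLp.ofLp_injective
      simp only [aux_toEuclideanLin_apply, Matrix.mulVec_mulVec, Matrix.mul_assoc]
    rw [lhs, hCeq]
    rfl
  · have hStr : Str V := by
      apply aux_str_inf
      · exact aux_str_iSup (f := fun j : P => j)
          (fun j => LinearMap.map_le_range)
      · apply aux_str_orth
        rw [hW]
        apply aux_str_inf
        · exact aux_str_iSup (f := fun j : P => j)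
            (fun j => iSup_le fun i => iSup_le fun _ => inf_le_left)
        · exact aux_str_iSup (f := fun j : P => j)
            (fun j => (iInf_le _ j).trans ((iInf_le _ le_rfl).trans inf_le_right))
    exact aux_str_eq_iSup hStr
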